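/- Suppose the quadruple of one-dimensional subspaces (H; H₁, H₂, H₃, H₄) of a two-dimensional complex Hilbert space H satisfies a₁P₁ + a₂P₂ + a₃P₃ + a₄P₄ = a₀I with all aᵢ > 0, dim Hᵢ = 1, and the four subspaces are pairwise distinct with H₁+H₂ = H₁+H₃ = H (i.e., the system is isomorphic to some S_μ). Then 2a₀ = a₁ + a₂ + a₃ + a₄ and 0 < aᵢ < a₀ for all i = 1,2,3,4. -/

import Mathlib

open Module Submodule

/-- necessity of the character conditions for nondegenerate
orthoscalar quadruples of lines in a 2-dimensional Hilbert space. -/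
theorem character_necessity_nondegenerate
    (H : Type*) [NormedAddCommGroup H] [InnerProductSpace ℂ H] [FiniteDimensional ℂ H]
    (hH : Module.finrank ℂ H = 2)
    (Hs : Fin 4 → Submodule ℂ H)
    (hdim : ∀ i, Module.finrank ℂ (Hs i) = 1)
    (hdist : ∀ i j, i ≠ j → Hs i ≠ Hs j)
    (h12 : Hs 0 ⊔ Hs 1 = ⊤) (h13 : Hs 0 ⊔ Hs 2 = ⊤)
    (a₀ : ℝ) (a : Fin 4 → ℝ) (ha : ∀ i, 0 < a i)
    (hrel : ∑ i, (a i : ℂ) • ((Hs i).subtypeL ∘L Submodule.orthogonalProjectionOnto (Hs i))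
      = (a₀ : ℂ) • ContinuousLinearMap.id ℂ H) :
    2 * a₀ = a 0 + a 1 + a 2 + a 3 ∧ ∀ i, 0 < a i ∧ a i < a₀ := by
  -- Part 1: trace
  have htr := congrArg (fun T : H →L[ℂ] H => LinearMap.trace ℂ H (T : H →ₗ[ℂ] H)) hrel
  simp only [ContinuousLinearMap.coe_sum, ContinuousLinearMap.coe_smul, map_sum, map_smul,
    ContinuousLinearMap.coe_comp, ContinuousLinearMap.coe_id, LinearMap.trace_id] at htr
  have htr1 : ∀ i, LinearMap.trace ℂ H (((Hs i).subtypeL : Hs i →ₗ[ℂ] H) ∘ₗ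
      ((orthogonalProjectionOnto (Hs i) : H →L[ℂ] Hs i) : H →ₗ[ℂ] Hs i)) = 1 := by
    intro i
    rw [LinearMap.trace_comp_comm']
    have : ((orthogonalProjectionOnto (Hs i) : H →L[ℂ] Hs i) : H →ₗ[ℂ] Hs i) ∘ₗ
        ((Hs i).subtypeL : Hs i →ₗ[ℂ] H) = LinearMap.id := by
      ext x
      simp [orthogonalProjectionOnto_mem_subspace_eq_self]
    rw [this, LinearMap.trace_id, hdim]
    norm_num
  rw [hH] at htr
  simp only [Submodule.toLinearMap_subtypeL] at htr1
  push_cast at htr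
  simp only [htr1, smul_eq_mul, mul_one] at htr
  have h1 : 2 * a₀ = a 0 + a 1 + a 2 + a 3 := by
    have : ((2 * a₀ : ℝ) : ℂ) = ((a 0 + a 1 + a 2 + a 3 : ℝ) : ℂ) := by
      rw [Fin.sum_univ_four] at htr
      push_cast at htr ⊢
      linear_combination -htr
    exact_mod_cast this
  refine ⟨h1, fun i => ⟨ha i, ?_⟩⟩
  -- Part 2
  have key : ∀ (K : Submodule ℂ H) (w : H),
      (inner ℂ w ((orthogonalProjectionOnto K w : H)) : ℂ)
        = ((‖(orthogonalProjectionOnto K w : H)‖^2 : ℝ) : ℂ) := by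
    intro K w
    have h0 : inner ℂ (w - (orthogonalProjectionOnto K w : H)) ((orthogonalProjectionOnto K w : H)) = 0 :=
      K.starProjection_inner_eq_zero w _ (orthogonalProjectionOnto K w).2
    have hsplit : (inner ℂ w ((orthogonalProjectionOnto K w : H)) : ℂ)
        = inner ℂ (w - (orthogonalProjectionOnto K w : H)) ((orthogonalProjectionOnto K w : H))
          + inner ℂ ((orthogonalProjectionOnto K w : H)) ((orthogonalProjectionOnto K w : H)) := by
      rw [← inner_add_left, sub_add_cancel]
    rw [hsplit, h0, zero_add, inner_self_eq_norm_sq_to_K]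
    norm_cast
  have main : ∀ (i j k : Fin 4), j ≠ i → k ≠ i → j ≠ k → a i < a₀ := by
    intro i j k hji hki hjk
    -- pick a nonzero vector in Hs i
    obtain ⟨v, hvmem, hv0⟩ : ∃ v ∈ Hs i, v ≠ 0 := by
      have : Hs i ≠ ⊥ := by
        intro h
        have := hdim i
        rw [h, finrank_bot] at this
        norm_num at this
      exact (Submodule.ne_bot_iff _).mp this
    set r : Fin 4 → ℝ := fun l => ‖(orthogonalProjectionOnto (Hs l) v : H)‖^2 with hr_def
    have hv := ContinuousLinearMap.ext_iff.mp hrel v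
    simp only [ContinuousLinearMap.sum_apply, ContinuousLinearMap.smul_apply,
      ContinuousLinearMap.comp_apply, ContinuousLinearMap.id_apply,
      Submodule.subtypeL_apply] at hv
    have hv2 := congrArg (fun w => (inner ℂ v w : ℂ)) hv
    simp only [inner_sum, inner_smul_right, key, inner_self_eq_norm_sq_to_K] at hv2
    have hreal : ∑ l, a l * r l = a₀ * ‖v‖^2 := by
      have : ((∑ l, a l * r l : ℝ) : ℂ) = ((a₀ * ‖v‖^2 : ℝ) : ℂ) := by
        push_cast
        convert hv2 using 2
        rfl
      exact_mod_cast this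
    -- projection of v onto Hs i is v itself
    have hri : r i = ‖v‖^2 := by
      have : (orthogonalProjectionOnto (Hs i) v : H) = v := by
        have := orthogonalProjectionOnto_mem_subspace_eq_self (K := Hs i) ⟨v, hvmem⟩
        exact congrArg Subtype.val this
      simp only [hr_def, this]
    -- if the projection onto Hs l vanishes then Hs l = (ℂ ∙ v)ᗮ
    have hperp : ∀ l, r l = 0 → Hs l = (ℂ ∙ v)ᗮ := by
      intro l h
      have h1 : (orthogonalProjectionOnto (Hs l) v : H) = 0 := by
        rw [hr_def] at h
        simpa [pow_eq_zero_iff, norm_eq_zero] using h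
      have h2 : v ∈ (Hs l)ᗮ := by
        rw [← Submodule.orthogonalProjectionOnto_eq_zero_iff (K := Hs l)]
        exact_mod_cast h1
      have hle : Hs l ≤ (ℂ ∙ v)ᗮ := by
        have h3 : (ℂ ∙ v) ≤ (Hs l)ᗮ := (Submodule.span_singleton_le_iff_mem v _).mpr h2
        exact le_trans (Submodule.le_orthogonal_orthogonal (Hs l))
          (Submodule.orthogonal_le h3)
      refine Submodule.eq_of_le_of_finrank_eq hle ?_
      rw [hdim]
      exact (Submodule.finrank_add_finrank_orthogonal'
        (by rw [finrank_span_singleton hv0, hH])).symm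
    have hnot : ¬ (r j = 0 ∧ r k = 0) := by
      rintro ⟨hj, hk⟩
      exact hdist j k hjk ((hperp j hj).trans (hperp k hk).symm)
    have hrnonneg : ∀ l, 0 ≤ r l := fun l => sq_nonneg _
    have hex : ∃ l ∈ Finset.univ.erase i, 0 < a l * r l := by
      rcases (not_and_or.mp hnot) with h | h
      · exact ⟨j, Finset.mem_erase.mpr ⟨hji, Finset.mem_univ j⟩,
          mul_pos (ha j) (lt_of_le_of_ne (hrnonneg j) (Ne.symm h))⟩
      · exact ⟨k, Finset.mem_erase.mpr ⟨hki, Finset.mem_univ k⟩,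
          mul_pos (ha k) (lt_of_le_of_ne (hrnonneg k) (Ne.symm h))⟩
    have hpos : 0 < ∑ l ∈ Finset.univ.erase i, a l * r l :=
      Finset.sum_pos' (fun l _ => mul_nonneg (ha l).le (hrnonneg l)) hex
    rw [← Finset.sum_erase_add _ _ (Finset.mem_univ i), hri] at hreal
    have hlt : a i * ‖v‖^2 < a₀ * ‖v‖^2 := by linarith
    have hvnorm : 0 < ‖v‖^2 := pow_pos (norm_pos_iff.mpr hv0) 2
    exact lt_of_mul_lt_mul_right (by linarith [hlt]) hvnorm.le
  fin_cases i
  · exact main 0 1 2 (by decide) (by decide) (by decide)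
  · exact main 1 0 2 (by decide) (by decide) (by decide)
  · exact main 2 0 1 (by decide) (by decide) (by decide)
  · exact main 3 0 1 (by decide) (by decide) (by decide)
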